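/- Over a field F of characteristic not 2, for any c_1, c_2, d_1, d_2 ∈ F× and β ∈ F with β² − c_1c_2 ≠ 0, the tensor products (c_1, d_1) ⊗_F (c_2, d_2) and (c_1, (β² − c_1c_2)d_1) ⊗_F (c_2, (β² − c_1c_2)d_2) are isomorphic as F-algebras. -/

import Mathlib

open scoped Quaternion TensorProduct

namespace QuatAux

open QuaternionAlgebra Algebra.TensorProduct

variable {F : Type*} [Field F]

lemma tneg_mul {A B : Type*} [Ring A] [Ring B] [Algebra F A] [Algebra F B] (y x : A ⊗[F] B) :
    -y * x = -(y * x) := neg_mul _ _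

lemma tmul_negR {A B : Type*} [Ring A] [Ring B] [Algebra F A] [Algebra F B] (y x : A ⊗[F] B) :
    x * -y = -(x * y) := mul_neg _ _

lemma commute_liftHom {A : Type*} [Ring A] [Algebra F A] {a b : F} (q : Basis A a 0 b) {x : A}
    (hi : Commute x q.i) (hj : Commute x q.j) (y : ℍ[F,a,b]) : Commute x (q.liftHom y) := by
  have hk : Commute x q.k := by rw [← q.i_mul_j]; exact hi.mul_right hj
  have h1 : Commute x (algebraMap F A y.re) := (Algebra.commutes y.re x).symm
  show Commute x (q.lift y)
  rw [Basis.lift]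
  exact ((h1.add_right (hi.smul_right _)).add_right (hj.smul_right _)).add_right
    (hk.smul_right _)

@[simp] lemma liftHom_self_i {A : Type*} [Ring A] [Algebra F A] {a b : F} (q : Basis A a 0 b) :
    q.liftHom (Basis.self F).i = q.i := by
  show q.lift _ = _
  simp [Basis.lift]

@[simp] lemma liftHom_self_j {A : Type*} [Ring A] [Algebra F A] {a b : F} (q : Basis A a 0 b) :
    q.liftHom (Basis.self F).j = q.j := by
  show q.lift _ = _
  simp [Basis.lift]

section

variable (e₁ f₁ e₂ f₂ : F)

noncomputable def t : ℍ[F,e₁,f₁] ⊗[F] ℍ[F,e₂,f₂] :=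
  (Basis.self F).i ⊗ₜ (Basis.self F).i

noncomputable def m (β s : F) : ℍ[F,e₁,f₁] ⊗[F] ℍ[F,e₂,f₂] :=
  β • 1 + s • t e₁ f₁ e₂ f₂

lemma m_mul_m (β s s' : F) (h0 : s + s' = 0) (h1 : s * s' = -1) :
    m e₁ f₁ e₂ f₂ β s * m e₁ f₁ e₂ f₂ β s' = (β ^ 2 - e₁ * e₂) • 1 := by
  simp only [m, t, add_mul, mul_add, smul_mul_assoc, mul_smul_comm, one_mul, mul_one,
    smul_smul, Algebra.TensorProduct.tmul_mul_tmul, Basis.i_mul_i,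
    TensorProduct.tmul_smul, ← TensorProduct.smul_tmul', Algebra.TensorProduct.one_def, zero_smul, add_zero, zero_sub,
      TensorProduct.tmul_zero, TensorProduct.zero_tmul, tneg_mul, tmul_negR, zero_mul]
  match_scalars
  · linear_combination (e₂ * e₁) * h1
  · linear_combination β * h0

variable (β s γ g₁ g₂ : F)

/-- the new quaternion basis for the first factor -/
noncomputable def bas₁ (hs : s = 1 ∨ s = -1) (hg : g₁ = γ * γ * (β ^ 2 - e₁ * e₂) * f₁) :
    Basis (ℍ[F,e₁,f₁] ⊗[F] ℍ[F,e₂,f₂]) e₁ 0 g₁ where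
  i := (Basis.self F).i ⊗ₜ 1
  j := γ • (((Basis.self F).j ⊗ₜ 1) * m e₁ f₁ e₂ f₂ β s)
  k := ((Basis.self F).i ⊗ₜ 1) * (γ • (((Basis.self F).j ⊗ₜ 1) * m e₁ f₁ e₂ f₂ β s))
  i_mul_i := by
    simp only [Algebra.TensorProduct.tmul_mul_tmul, Basis.i_mul_i, one_mul,
      ← TensorProduct.smul_tmul', Algebra.TensorProduct.one_def, zero_smul, add_zero, zero_sub,
      TensorProduct.tmul_zero, TensorProduct.zero_tmul, tneg_mul, tmul_negR, zero_mul]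
  i_mul_j := rfl
  j_mul_j := by
    subst hg
    simp only [m, t, add_mul, mul_add, smul_mul_assoc, mul_smul_comm, one_mul, mul_one,
      smul_smul, Algebra.TensorProduct.tmul_mul_tmul, Basis.i_mul_i, Basis.j_mul_j,
      Basis.i_mul_j, Basis.j_mul_i, Basis.i_mul_k, Basis.k_mul_i, Basis.k_mul_j,
      Basis.j_mul_k, Basis.k_mul_k, TensorProduct.neg_tmul, TensorProduct.tmul_neg, mul_neg, neg_mul, smul_neg,
      TensorProduct.tmul_smul, ← TensorProduct.smul_tmul', Algebra.TensorProduct.one_def, zero_smul, add_zero, zero_sub,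
      TensorProduct.tmul_zero, TensorProduct.zero_tmul, tneg_mul, tmul_negR, zero_mul]
    match_scalars <;> rcases hs with rfl | rfl <;> ring1
  j_mul_i := by
    simp only [m, t, add_mul, mul_add, smul_mul_assoc, mul_smul_comm, one_mul, mul_one,
      smul_smul, Algebra.TensorProduct.tmul_mul_tmul, Basis.i_mul_i, Basis.j_mul_j,
      Basis.i_mul_j, Basis.j_mul_i, Basis.i_mul_k, Basis.k_mul_i, Basis.k_mul_j,
      Basis.j_mul_k, Basis.k_mul_k, TensorProduct.neg_tmul, TensorProduct.tmul_neg, mul_neg, neg_mul, smul_neg,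
      TensorProduct.tmul_smul, ← TensorProduct.smul_tmul', Algebra.TensorProduct.one_def, zero_smul, add_zero, zero_sub,
      TensorProduct.tmul_zero, TensorProduct.zero_tmul, tneg_mul, tmul_negR, zero_mul]
    match_scalars <;> ring1

/-- the new quaternion basis for the second factor -/
noncomputable def bas₂ (hs : s = 1 ∨ s = -1) (hg : g₂ = γ * γ * (β ^ 2 - e₁ * e₂) * f₂) :
    Basis (ℍ[F,e₁,f₁] ⊗[F] ℍ[F,e₂,f₂]) e₂ 0 g₂ where
  i := 1 ⊗ₜ (Basis.self F).i
  j := γ • ((1 ⊗ₜ (Basis.self F).j) * m e₁ f₁ e₂ f₂ β s)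
  k := (1 ⊗ₜ (Basis.self F).i) * (γ • ((1 ⊗ₜ (Basis.self F).j) * m e₁ f₁ e₂ f₂ β s))
  i_mul_i := by
    simp only [Algebra.TensorProduct.tmul_mul_tmul, Basis.i_mul_i, one_mul,
      TensorProduct.tmul_smul, Algebra.TensorProduct.one_def, zero_smul, add_zero, zero_sub,
      TensorProduct.tmul_zero, TensorProduct.zero_tmul, tneg_mul, tmul_negR, zero_mul]
  i_mul_j := rfl
  j_mul_j := by
    subst hg
    simp only [m, t, add_mul, mul_add, smul_mul_assoc, mul_smul_comm, one_mul, mul_one,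
      smul_smul, Algebra.TensorProduct.tmul_mul_tmul, Basis.i_mul_i, Basis.j_mul_j,
      Basis.i_mul_j, Basis.j_mul_i, Basis.i_mul_k, Basis.k_mul_i, Basis.k_mul_j,
      Basis.j_mul_k, Basis.k_mul_k, TensorProduct.neg_tmul, TensorProduct.tmul_neg, mul_neg, neg_mul, smul_neg,
      TensorProduct.tmul_smul, ← TensorProduct.smul_tmul', Algebra.TensorProduct.one_def, zero_smul, add_zero, zero_sub,
      TensorProduct.tmul_zero, TensorProduct.zero_tmul, tneg_mul, tmul_negR, zero_mul]
    match_scalars <;> rcases hs with rfl | rfl <;> ring1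
  j_mul_i := by
    simp only [m, t, add_mul, mul_add, smul_mul_assoc, mul_smul_comm, one_mul, mul_one,
      smul_smul, Algebra.TensorProduct.tmul_mul_tmul, Basis.i_mul_i, Basis.j_mul_j,
      Basis.i_mul_j, Basis.j_mul_i, Basis.i_mul_k, Basis.k_mul_i, Basis.k_mul_j,
      Basis.j_mul_k, Basis.k_mul_k, TensorProduct.neg_tmul, TensorProduct.tmul_neg, mul_neg, neg_mul, smul_neg,
      TensorProduct.tmul_smul, ← TensorProduct.smul_tmul', Algebra.TensorProduct.one_def, zero_smul, add_zero, zero_sub,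
      TensorProduct.tmul_zero, TensorProduct.zero_tmul, tneg_mul, tmul_negR, zero_mul]
    match_scalars <;> ring1

lemma comm (hs : s = 1 ∨ s = -1) (hg₁ : g₁ = γ * γ * (β ^ 2 - e₁ * e₂) * f₁)
    (hg₂ : g₂ = γ * γ * (β ^ 2 - e₁ * e₂) * f₂) (x : ℍ[F,e₁,g₁]) (y : ℍ[F,e₂,g₂]) :
    Commute ((bas₁ e₁ f₁ e₂ f₂ β s γ g₁ hs hg₁).liftHom x)
      ((bas₂ e₁ f₁ e₂ f₂ β s γ g₂ hs hg₂).liftHom y) := by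
  have hii : Commute (bas₁ e₁ f₁ e₂ f₂ β s γ g₁ hs hg₁).i
      (bas₂ e₁ f₁ e₂ f₂ β s γ g₂ hs hg₂).i := by
    show _ * _ = _ * _
    dsimp only [bas₁, bas₂]
    simp only [Algebra.TensorProduct.tmul_mul_tmul, one_mul, mul_one]
  have hij : Commute (bas₁ e₁ f₁ e₂ f₂ β s γ g₁ hs hg₁).i
      (bas₂ e₁ f₁ e₂ f₂ β s γ g₂ hs hg₂).j := by
    show _ * _ = _ * _
    dsimp only [bas₁, bas₂]
    simp only [m, t, add_mul, mul_add, smul_mul_assoc, mul_smul_comm, one_mul, mul_one,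
      smul_smul, Algebra.TensorProduct.tmul_mul_tmul, Basis.i_mul_i, Basis.j_mul_j,
      Basis.i_mul_j, Basis.j_mul_i, Basis.i_mul_k, Basis.k_mul_i, Basis.k_mul_j,
      Basis.j_mul_k, Basis.k_mul_k, TensorProduct.neg_tmul, TensorProduct.tmul_neg,
      mul_neg, neg_mul, smul_neg,
      TensorProduct.tmul_smul, ← TensorProduct.smul_tmul', Algebra.TensorProduct.one_def, zero_smul, add_zero, zero_sub,
      TensorProduct.tmul_zero, TensorProduct.zero_tmul, tneg_mul, tmul_negR, zero_mul]
    all_goals match_scalars <;> ring1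
  have hji : Commute (bas₁ e₁ f₁ e₂ f₂ β s γ g₁ hs hg₁).j
      (bas₂ e₁ f₁ e₂ f₂ β s γ g₂ hs hg₂).i := by
    show _ * _ = _ * _
    dsimp only [bas₁, bas₂]
    simp only [m, t, add_mul, mul_add, smul_mul_assoc, mul_smul_comm, one_mul, mul_one,
      smul_smul, Algebra.TensorProduct.tmul_mul_tmul, Basis.i_mul_i, Basis.j_mul_j,
      Basis.i_mul_j, Basis.j_mul_i, Basis.i_mul_k, Basis.k_mul_i, Basis.k_mul_j,
      Basis.j_mul_k, Basis.k_mul_k, TensorProduct.neg_tmul, TensorProduct.tmul_neg,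
      mul_neg, neg_mul, smul_neg,
      TensorProduct.tmul_smul, ← TensorProduct.smul_tmul', Algebra.TensorProduct.one_def, zero_smul, add_zero, zero_sub,
      TensorProduct.tmul_zero, TensorProduct.zero_tmul, tneg_mul, tmul_negR, zero_mul]
    all_goals match_scalars <;> ring1
  have hjj : Commute (bas₁ e₁ f₁ e₂ f₂ β s γ g₁ hs hg₁).j
      (bas₂ e₁ f₁ e₂ f₂ β s γ g₂ hs hg₂).j := by
    show _ * _ = _ * _
    dsimp only [bas₁, bas₂]
    simp only [m, t, add_mul, mul_add, smul_mul_assoc, mul_smul_comm, one_mul, mul_one,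
      smul_smul, Algebra.TensorProduct.tmul_mul_tmul, Basis.i_mul_i, Basis.j_mul_j,
      Basis.i_mul_j, Basis.j_mul_i, Basis.i_mul_k, Basis.k_mul_i, Basis.k_mul_j,
      Basis.j_mul_k, Basis.k_mul_k, TensorProduct.neg_tmul, TensorProduct.tmul_neg,
      mul_neg, neg_mul, smul_neg,
      TensorProduct.tmul_smul, ← TensorProduct.smul_tmul', Algebra.TensorProduct.one_def, zero_smul, add_zero, zero_sub,
      TensorProduct.tmul_zero, TensorProduct.zero_tmul, tneg_mul, tmul_negR, zero_mul]
    all_goals match_scalars <;> rcases hs with rfl | rfl <;> ring1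
  refine commute_liftHom _ ?_ ?_ y
  · exact (commute_liftHom _ hii.symm hji.symm x).symm
  · exact (commute_liftHom _ hij.symm hjj.symm x).symm

/-- the algebra homomorphism -/
noncomputable def Phi (hs : s = 1 ∨ s = -1) (hg₁ : g₁ = γ * γ * (β ^ 2 - e₁ * e₂) * f₁)
    (hg₂ : g₂ = γ * γ * (β ^ 2 - e₁ * e₂) * f₂) :
    (ℍ[F,e₁,g₁] ⊗[F] ℍ[F,e₂,g₂]) →ₐ[F] (ℍ[F,e₁,f₁] ⊗[F] ℍ[F,e₂,f₂]) :=
  Algebra.TensorProduct.lift (bas₁ e₁ f₁ e₂ f₂ β s γ g₁ hs hg₁).liftHom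
    (bas₂ e₁ f₁ e₂ f₂ β s γ g₂ hs hg₂).liftHom (comm e₁ f₁ e₂ f₂ β s γ g₁ g₂ hs hg₁ hg₂)

variable (hs : s = 1 ∨ s = -1) (hg₁ : g₁ = γ * γ * (β ^ 2 - e₁ * e₂) * f₁)
    (hg₂ : g₂ = γ * γ * (β ^ 2 - e₁ * e₂) * f₂)

lemma Phi_i₁ : Phi e₁ f₁ e₂ f₂ β s γ g₁ g₂ hs hg₁ hg₂ ((Basis.self F).i ⊗ₜ 1)
    = (Basis.self F).i ⊗ₜ 1 := by
  rw [Phi, Algebra.TensorProduct.lift_tmul, map_one, mul_one, liftHom_self_i]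
  rfl

lemma Phi_j₁ : Phi e₁ f₁ e₂ f₂ β s γ g₁ g₂ hs hg₁ hg₂ ((Basis.self F).j ⊗ₜ 1)
    = γ • (((Basis.self F).j ⊗ₜ 1) * m e₁ f₁ e₂ f₂ β s) := by
  rw [Phi, Algebra.TensorProduct.lift_tmul, map_one, mul_one, liftHom_self_j]
  rfl

lemma Phi_i₂ : Phi e₁ f₁ e₂ f₂ β s γ g₁ g₂ hs hg₁ hg₂ (1 ⊗ₜ (Basis.self F).i)
    = 1 ⊗ₜ (Basis.self F).i := by
  rw [Phi, Algebra.TensorProduct.lift_tmul, map_one, one_mul, liftHom_self_i]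
  rfl

lemma Phi_j₂ : Phi e₁ f₁ e₂ f₂ β s γ g₁ g₂ hs hg₁ hg₂ (1 ⊗ₜ (Basis.self F).j)
    = γ • ((1 ⊗ₜ (Basis.self F).j) * m e₁ f₁ e₂ f₂ β s) := by
  rw [Phi, Algebra.TensorProduct.lift_tmul, map_one, one_mul, liftHom_self_j]
  rfl

lemma Phi_m (u : F) : Phi e₁ f₁ e₂ f₂ β s γ g₁ g₂ hs hg₁ hg₂ (m e₁ g₁ e₂ g₂ β u)
    = m e₁ f₁ e₂ f₂ β u := by
  rw [m, m, map_add, map_smul, map_one, map_smul, t, t, Phi,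
    Algebra.TensorProduct.lift_tmul, liftHom_self_i, liftHom_self_i]
  dsimp only [bas₁, bas₂]
  rw [Algebra.TensorProduct.tmul_mul_tmul, one_mul, mul_one]

end
end QuatAux

open QuatAux

/-- Over a field of characteristic not 2, for `c₁, c₂, d₁, d₂ ≠ 0` and `β² − c₁c₂ ≠ 0`,
`(c₁,d₁) ⊗ (c₂,d₂) ≅ (c₁, (β²−c₁c₂)d₁) ⊗ (c₂, (β²−c₁c₂)d₂)`. -/
theorem quaternion_tensor_iso {F : Type*} [Field F] (h2 : (2 : F) ≠ 0)
    (c₁ c₂ d₁ d₂ β : F) (hc₁ : c₁ ≠ 0) (hc₂ : c₂ ≠ 0) (hd₁ : d₁ ≠ 0) (hd₂ : d₂ ≠ 0)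
    (h : β ^ 2 - c₁ * c₂ ≠ 0) :
    Nonempty ((ℍ[F, c₁, d₁] ⊗[F] ℍ[F, c₂, d₂]) ≃ₐ[F]
      (ℍ[F, c₁, (β ^ 2 - c₁ * c₂) * d₁] ⊗[F] ℍ[F, c₂, (β ^ 2 - c₁ * c₂) * d₂])) := by
  set lam : F := β ^ 2 - c₁ * c₂ with hlam
  have hA₁ : d₁ = lam⁻¹ * lam⁻¹ * (β ^ 2 - c₁ * c₂) * (lam * d₁) := by
    rw [← hlam]; field_simp
  have hA₂ : d₂ = lam⁻¹ * lam⁻¹ * (β ^ 2 - c₁ * c₂) * (lam * d₂) := by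
    rw [← hlam]; field_simp
  have hB₁ : lam * d₁ = 1 * 1 * (β ^ 2 - c₁ * c₂) * d₁ := by rw [← hlam]; ring
  have hB₂ : lam * d₂ = 1 * 1 * (β ^ 2 - c₁ * c₂) * d₂ := by rw [← hlam]; ring
  refine ⟨AlgEquiv.ofAlgHom
    (Phi c₁ (lam * d₁) c₂ (lam * d₂) β (-1) lam⁻¹ d₁ d₂ (Or.inr rfl) hA₁ hA₂)
    (Phi c₁ d₁ c₂ d₂ β 1 1 (lam * d₁) (lam * d₂) (Or.inl rfl) hB₁ hB₂) ?_ ?_⟩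
  · refine Algebra.TensorProduct.ext (QuaternionAlgebra.hom_ext ?_ ?_)
      (QuaternionAlgebra.hom_ext ?_ ?_) <;>
      simp only [AlgHom.coe_comp, Function.comp_apply,
        Algebra.TensorProduct.includeLeft_apply, Algebra.TensorProduct.includeRight_apply,
        AlgHom.coe_id, id_eq, AlgHom.id_apply, AlgHom.restrictScalars_apply]
    · rw [Phi_i₁, Phi_i₁]
    · rw [Phi_j₁, one_smul, map_mul, Phi_j₁, Phi_m, smul_mul_assoc, mul_assoc,
        m_mul_m c₁ (lam * d₁) c₂ (lam * d₂) β (-1) 1 (by ring) (by ring),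
        mul_smul_comm, mul_one, smul_smul, ← hlam, inv_mul_cancel₀ h, one_smul]
    · rw [Phi_i₂, Phi_i₂]
    · rw [Phi_j₂, one_smul, map_mul, Phi_j₂, Phi_m, smul_mul_assoc, mul_assoc,
        m_mul_m c₁ (lam * d₁) c₂ (lam * d₂) β (-1) 1 (by ring) (by ring),
        mul_smul_comm, mul_one, smul_smul, ← hlam, inv_mul_cancel₀ h, one_smul]
  · refine Algebra.TensorProduct.ext (QuaternionAlgebra.hom_ext ?_ ?_)
      (QuaternionAlgebra.hom_ext ?_ ?_) <;>
      simp only [AlgHom.coe_comp, Function.comp_apply,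
        Algebra.TensorProduct.includeLeft_apply, Algebra.TensorProduct.includeRight_apply,
        AlgHom.coe_id, id_eq, AlgHom.id_apply, AlgHom.restrictScalars_apply]
    · rw [Phi_i₁, Phi_i₁]
    · rw [Phi_j₁, map_smul, map_mul, Phi_j₁, Phi_m, one_smul, mul_assoc,
        m_mul_m c₁ d₁ c₂ d₂ β 1 (-1) (by ring) (by ring),
        mul_smul_comm, mul_one, smul_smul, ← hlam, inv_mul_cancel₀ h, one_smul]
    · rw [Phi_i₂, Phi_i₂]
    · rw [Phi_j₂, map_smul, map_mul, Phi_j₂, Phi_m, one_smul, mul_assoc,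
        m_mul_m c₁ d₁ c₂ d₂ β 1 (-1) (by ring) (by ring),
        mul_smul_comm, mul_one, smul_smul, ← hlam, inv_mul_cancel₀ h, one_smul]
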